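/- In a constant-product AMM with reserves x, y > 0, fee multiplier η ∈ (0,1), and reference price P* > 0, the maximal profit over q ≥ 0 of the trade Π(q) = yηq/(x + ηq) − P*q equals (√y − √(xP*/η))_+², where (t)_+ = max(t,0). -/

import Mathlib

/-- The maximal profit over `q ≥ 0` of `Π(q) = yηq/(x+ηq) − P⋆ q` equals
`(√y − √(xP⋆/η))₊²`. -/
theorem cp_optimal_profit (x y η Pstar : ℝ)
    (hx : 0 < x) (hy : 0 < y) (hη : η ∈ Set.Ioo (0:ℝ) 1) (hP : 0 < Pstar) :
    IsGreatest ((fun q : ℝ => y * η * q / (x + η * q) - Pstar * q) '' Set.Ici 0)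
      ((max (Real.sqrt y - Real.sqrt (x * Pstar / η)) 0) ^ 2) := by
  obtain ⟨hη0, hη1⟩ := hη
  set a := Real.sqrt (x * Pstar / η) with ha
  set s := Real.sqrt y with hs
  have hxPη : 0 < x * Pstar / η := by positivity
  have ha2 : a ^ 2 = x * Pstar / η := Real.sq_sqrt hxPη.le
  have hs2 : s ^ 2 = y := Real.sq_sqrt hy.le
  have ha0 : 0 < a := Real.sqrt_pos.mpr hxPη
  have hs0 : 0 < s := Real.sqrt_pos.mpr hy
  have hax : a ^ 2 * η = x * Pstar := by
    field_simp at ha2; linarith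
  constructor
  · by_cases h : a < s
    · have hM : max (s - a) 0 = s - a := max_eq_left (by linarith)
      refine ⟨a * (s - a) / Pstar, ?_, ?_⟩
      · have : 0 ≤ a * (s - a) / Pstar :=
          div_nonneg (mul_nonneg ha0.le (by linarith)) hP.le
        simpa using this
      · rw [hM]
        have hxeq : x = a ^ 2 * η / Pstar := by
          field_simp; linarith [hax]
        simp only
        rw [← hs2, hxeq]
        have hden : a ^ 2 * η / Pstar + η * (a * (s - a) / Pstar) = a * s * η / Pstar := by
          field_simp; ring
        rw [hden]
        have hdpos : (0:ℝ) < a * s * η / Pstar := by positivity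
        field_simp
    · have hM : max (s - a) 0 = 0 := max_eq_right (by linarith [not_lt.mp h])
      refine ⟨0, by simp, by simp [hM]⟩
  · rintro p ⟨q, hq, rfl⟩
    simp only [Set.mem_Ici] at hq
    have hd : 0 < x + η * q := by positivity
    by_cases h : a < s
    · have hM : max (s - a) 0 = s - a := max_eq_left (by linarith)
      rw [hM]
      have hid : η * Pstar * ((((s-a)^2 + Pstar*q) * (x + η*q)) - y * η * q)
          = ((x + η*q)*Pstar - a*s*η)^2 := by
        linear_combination (η^2*Pstar*q) * hs2
          + (x*Pstar - η*(s-a)^2 + η*Pstar*q - 2*a*s*η + η*a^2) * hax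
      have hsq : (0:ℝ) ≤ ((x + η*q)*Pstar - a*s*η)^2 := sq_nonneg _
      have hpos : 0 < η * Pstar := mul_pos hη0 hP
      have hΔ : 0 ≤ (((s-a)^2 + Pstar*q) * (x + η*q)) - y * η * q := by
        nlinarith [hid, hsq, hpos]
      have key : y * η * q / (x + η * q) ≤ (s - a) ^ 2 + Pstar * q := by
        rw [div_le_iff₀ hd]
        nlinarith [hΔ]
      linarith
    · have hM : max (s - a) 0 = 0 := max_eq_right (by linarith [not_lt.mp h])
      rw [hM]
      have hsa : s ^ 2 ≤ a ^ 2 := by nlinarith [not_lt.mp h, hs0.le]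
      have hy' : y * η ≤ x * Pstar := by
        nlinarith [mul_le_mul_of_nonneg_right hsa hη0.le]
      have key : y * η * q / (x + η * q) ≤ Pstar * q := by
        rw [div_le_iff₀ hd]
        nlinarith [mul_le_mul_of_nonneg_right hy' hq,
          mul_nonneg (mul_nonneg hP.le hq) (mul_nonneg hη0.le hq)]
      simp only [sub_nonpos] at *
      norm_num
      linarith
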